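/- Let X be a σ-finite measure space and φ ∈ L^∞(X^{n+1}). For kernels A_1, …, A_n ∈ L^2(X × X), define M_φ(A_1,…,A_n)(t_0, t_n) = ∫_{X^{n-1}} φ(t_0,…,t_n) A_1(t_0,t_1) A_2(t_1,t_2) ⋯ A_n(t_{n-1},t_n) dt_1⋯dt_{n-1}. Then M_φ(A_1,…,A_n) ∈ L^2(X × X) and ‖M_φ(A_1,…,A_n)‖_{L^2(X×X)} ≤ ‖φ‖_∞ ∏_{i=1}^n ‖A_i‖_{L^2(X×X)} (in fact Hilbert–Schmidt norm bounded by ‖φ‖_∞ times the product of the L^2 norms, using Cauchy–Schwarz). -/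

import Mathlib

open MeasureTheory Measure
open scoped ENNReal NNReal

/-- The chain of points `t₀, u₁, …, u_{n-1}, tₙ`, as a function of the index `m ∈ {0, …, n}`. -/
def chainPt {X : Type*} (n : ℕ) (t0 tn : X) (u : Fin (n - 1) → X) (m : ℕ) : X :=
  if m = 0 then t0 else if h : m - 1 < n - 1 then u ⟨m - 1, h⟩ else tn

section Aux

variable {X : Type*} [MeasurableSpace X]

lemma chainPt_zero (n : ℕ) (a b : X) (u : Fin (n - 1) → X) :
    chainPt n a b u 0 = a := by simp [chainPt]

lemma measurable_chainPt (n : ℕ) (a b : X) (m : ℕ) :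
    Measurable fun u : Fin (n - 1) → X => chainPt n a b u m := by
  unfold chainPt
  split_ifs with h1 h2
  · exact measurable_const
  · exact measurable_pi_apply _
  · exact measurable_const

lemma measurable_chainPt_pair (n : ℕ) (m : ℕ) :
    Measurable fun q : (X × X) × (Fin (n - 1) → X) => chainPt n q.1.1 q.1.2 q.2 m := by
  unfold chainPt
  split_ifs with h1 h2
  · exact measurable_fst.fst
  · exact (measurable_pi_apply _).comp measurable_snd
  · exact measurable_fst.snd

lemma chainPt_cons_succ (k : ℕ) (a b t : X) (v : Fin k → X) (m : ℕ) :
    chainPt (k + 2) a b (Fin.cons t v) (m + 1) = chainPt (k + 1) t b v m := by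
  rcases m with _ | j
  · show chainPt (k + 2) a b (Fin.cons t v) 1 = chainPt (k + 1) t b v 0
    rw [chainPt_zero]
    unfold chainPt
    rw [if_neg (by omega), dif_pos (by omega : (1:ℕ) - 1 < (k + 2) - 1)]
    have : (⟨1 - 1, (by omega : (1:ℕ) - 1 < (k + 2) - 1)⟩ : Fin (k + 1)) = 0 := by
      ext; simp
    rw [this, Fin.cons_zero]
  · by_cases hk : j < k
    · have h1 : (j + 1 + 1) - 1 < (k + 2) - 1 := by omega
      have h2 : (j + 1) - 1 < (k + 1) - 1 := by omega
      unfold chainPt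
      rw [if_neg (by omega), if_neg (by omega), dif_pos h1, dif_pos h2]
      have : (⟨j + 1 + 1 - 1, h1⟩ : Fin (k + 1)) = Fin.succ ⟨j, hk⟩ := by
        ext; simp
      have h3 : (⟨j + 1 - 1, h2⟩ : Fin k) = ⟨j, hk⟩ := by ext; simp
      rw [this, Fin.cons_succ, h3]
    · unfold chainPt
      rw [if_neg (by omega), if_neg (by omega), dif_neg (by omega), dif_neg (by omega)]

lemma chain_eq_cons_snoc (k : ℕ) (a b : X) (u : Fin k → X) :
    (fun j : Fin (k + 2) => chainPt (k + 1) a b u j.1) = Fin.cons a (Fin.snoc u b) := by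
  funext j
  induction j using Fin.cases with
  | zero => simpa using chainPt_zero (k + 1) a b u
  | succ i =>
    rw [Fin.cons_succ]
    induction i using Fin.lastCases with
    | last =>
      rw [Fin.snoc_last]
      show chainPt (k + 1) a b u ((Fin.last k).1 + 1) = b
      unfold chainPt
      rw [if_neg (by omega), dif_neg (by simp)]
    | cast i =>
      rw [Fin.snoc_castSucc]
      show chainPt (k + 1) a b u ((Fin.castSucc i).1 + 1) = u i
      unfold chainPt
      have hi : (Fin.castSucc i).1 + 1 - 1 < (k + 1) - 1 := by
        simpa using i.isLt
      rw [if_neg (by omega), dif_pos hi]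
      have : (⟨(Fin.castSucc i).1 + 1 - 1, hi⟩ : Fin k) = i := by ext; simp
      exact congrArg u this

/-- The composition of `k+1` kernels. -/
noncomputable def Kcomp (μ : Measure X) : ∀ k, (Fin (k + 1) → X × X → ℝ≥0∞) → X × X → ℝ≥0∞
  | 0, f, p => f 0 p
  | (k + 1), f, p => ∫⁻ t, f 0 (p.1, t) * Kcomp μ k (fun i => f i.succ) (t, p.2) ∂μ

variable (μ : Measure X) [SigmaFinite μ]

lemma Kcomp_measurable : ∀ (k : ℕ) (f : Fin (k + 1) → X × X → ℝ≥0∞),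
    (∀ i, Measurable (f i)) → Measurable (Kcomp μ k f)
  | 0, f, hf => hf 0
  | (k + 1), f, hf => by
    have h1 : Measurable fun q : (X × X) × X =>
        f 0 (q.1.1, q.2) * Kcomp μ k (fun i => f i.succ) (q.2, q.1.2) :=
      ((hf 0).comp (measurable_fst.fst.prodMk measurable_snd)).mul
        ((Kcomp_measurable k _ (fun i => hf i.succ)).comp
          (measurable_snd.prodMk measurable_fst.snd))
    exact h1.lintegral_prod_right'

lemma lintegral_mul_sq_le {f g : X → ℝ≥0∞} (hf : AEMeasurable f μ) (hg : AEMeasurable g μ) :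
    (∫⁻ t, f t * g t ∂μ) ^ 2 ≤ (∫⁻ t, f t ^ 2 ∂μ) * (∫⁻ t, g t ^ 2 ∂μ) := by
  have hpq : Real.HolderConjugate 2 2 := Real.HolderConjugate.two_two
  have h := ENNReal.lintegral_mul_le_Lp_mul_Lq μ hpq hf hg
  simp only [Pi.mul_apply] at h
  have h2 := pow_le_pow_left₀ zero_le h 2
  refine h2.trans_eq ?_
  rw [mul_pow, ← ENNReal.rpow_natCast ((∫⁻ t, f t ^ (2:ℝ) ∂μ) ^ (1/(2:ℝ))) 2,
    ← ENNReal.rpow_natCast ((∫⁻ t, g t ^ (2:ℝ) ∂μ) ^ (1/(2:ℝ))) 2,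
    ← ENNReal.rpow_mul, ← ENNReal.rpow_mul]
  norm_num [ENNReal.rpow_two]

lemma Kcomp_sq_le : ∀ (k : ℕ) (f : Fin (k + 1) → X × X → ℝ≥0∞),
    (∀ i, Measurable (f i)) →
    ∫⁻ p, Kcomp μ k f p ^ 2 ∂(μ.prod μ) ≤ ∏ i, ∫⁻ p, f i p ^ 2 ∂(μ.prod μ)
  | 0, f, hf => by
    simp only [Fin.prod_univ_succ, Finset.univ_eq_empty, Finset.prod_empty, mul_one]
    exact le_of_eq rfl
  | (k + 1), f, hf => by
    set g := Kcomp μ k (fun i => f i.succ) with hgdef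
    have hg : Measurable g := Kcomp_measurable μ k _ fun i => hf i.succ
    have hK : Measurable (Kcomp μ (k + 1) f) := Kcomp_measurable μ (k + 1) f hf
    have hGmeas : Measurable fun b : X => ∫⁻ t, g (t, b) ^ 2 ∂μ :=
      ((hg.comp (measurable_snd.prodMk measurable_fst)).pow_const 2).lintegral_prod_right'
    have hFmeas : Measurable fun a : X => ∫⁻ t, f 0 (a, t) ^ 2 ∂μ :=
      (((hf 0).comp (measurable_fst.prodMk measurable_snd)).pow_const 2).lintegral_prod_right'
    calc ∫⁻ p, Kcomp μ (k + 1) f p ^ 2 ∂(μ.prod μ)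
        = ∫⁻ a, ∫⁻ b, Kcomp μ (k + 1) f (a, b) ^ 2 ∂μ ∂μ :=
          lintegral_prod _ (hK.pow_const 2).aemeasurable
      _ ≤ ∫⁻ a, ∫⁻ b, (∫⁻ t, f 0 (a, t) ^ 2 ∂μ) * (∫⁻ t, g (t, b) ^ 2 ∂μ) ∂μ ∂μ := by
          refine lintegral_mono fun a => lintegral_mono fun b => ?_
          exact lintegral_mul_sq_le μ ((hf 0).comp measurable_prodMk_left).aemeasurable
            (hg.comp (measurable_id.prodMk measurable_const)).aemeasurable
      _ = (∫⁻ a, ∫⁻ t, f 0 (a, t) ^ 2 ∂μ ∂μ) * (∫⁻ b, ∫⁻ t, g (t, b) ^ 2 ∂μ ∂μ) := by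
          simp_rw [lintegral_const_mul _ hGmeas]
          exact lintegral_mul_const _ hFmeas
      _ = (∫⁻ p, f 0 p ^ 2 ∂(μ.prod μ)) * (∫⁻ p, g p ^ 2 ∂(μ.prod μ)) := by
          congr 1
          · exact (lintegral_prod _ ((hf 0).pow_const 2).aemeasurable).symm
          · rw [lintegral_lintegral_swap]
            · exact (lintegral_prod _ (hg.pow_const 2).aemeasurable).symm
            · exact ((hg.comp (measurable_snd.prodMk measurable_fst)).pow_const 2).aemeasurable
      _ ≤ (∫⁻ p, f 0 p ^ 2 ∂(μ.prod μ)) * ∏ i : Fin (k + 1), ∫⁻ p, f i.succ p ^ 2 ∂(μ.prod μ) := by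
          gcongr
          exact Kcomp_sq_le k _ fun i => hf i.succ
      _ = ∏ i : Fin (k + 2), ∫⁻ p, f i p ^ 2 ∂(μ.prod μ) := by conv_rhs => rw [Fin.prod_univ_succ]

lemma chain_lintegral_eq : ∀ (k : ℕ) (f : Fin (k + 1) → X × X → ℝ≥0∞),
    (∀ i, Measurable (f i)) → ∀ a b : X,
    (∫⁻ u : Fin k → X, ∏ m : Fin (k + 1),
        f m (chainPt (k + 1) a b u m.1, chainPt (k + 1) a b u (m.1 + 1))
      ∂(Measure.pi fun _ => μ)) = Kcomp μ k f (a, b)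
  | 0, f, hf, a, b => by
    rw [Measure.pi_of_empty]
    rw [lintegral_dirac' _ Subsingleton.measurable]
    simp [chainPt, Fin.prod_univ_one, Kcomp]
  | (k + 1), f, hf, a, b => by
    set F : (Fin (k + 1) → X) → ℝ≥0∞ := fun u => ∏ m : Fin (k + 2),
      f m (chainPt (k + 2) a b u m.1, chainPt (k + 2) a b u (m.1 + 1)) with hFdef
    have hF : Measurable F :=
      Finset.measurable_prod _ fun m _ => (hf m).comp
        ((measurable_chainPt (k + 2) a b m.1).prodMk (measurable_chainPt (k + 2) a b (m.1 + 1)))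
    have e := (measurePreserving_piFinSuccAbove (fun _ : Fin (k + 1) => μ) 0).symm
    have key : (∫⁻ u : Fin (k + 1) → X, F u ∂(Measure.pi fun _ => μ))
        = ∫⁻ x : X × (Fin k → X),
            F ((MeasurableEquiv.piFinSuccAbove (fun _ : Fin (k + 1) => X) 0).symm x)
          ∂(μ.prod (Measure.pi fun _ => μ)) := (e.lintegral_comp hF).symm
    have he : ∀ (t : X) (v : Fin k → X),
        (MeasurableEquiv.piFinSuccAbove (fun _ : Fin (k + 1) => X) 0).symm (t, v)
          = Fin.cons t v := by
      intro t v
      rw [MeasurableEquiv.piFinSuccAbove_symm_apply]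
      exact Fin.insertNth_zero' t v
    have hFcons : ∀ (t : X) (v : Fin k → X), F (Fin.cons t v)
        = f 0 (a, t) * ∏ m : Fin (k + 1),
            f m.succ (chainPt (k + 1) t b v m.1, chainPt (k + 1) t b v (m.1 + 1)) := by
      intro t v
      show (∏ m : Fin (k + 2), f m (chainPt (k + 2) a b (Fin.cons t v) m.1,
          chainPt (k + 2) a b (Fin.cons t v) (m.1 + 1))) = _
      rw [Fin.prod_univ_succ]
      congr 1
      · refine Finset.prod_congr rfl fun m _ => ?_
        simp only [Fin.val_succ]
        rw [chainPt_cons_succ, chainPt_cons_succ]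
    have hP : ∀ t : X, Measurable fun v : Fin k → X => ∏ m : Fin (k + 1),
        f m.succ (chainPt (k + 1) t b v m.1, chainPt (k + 1) t b v (m.1 + 1)) := fun t =>
      Finset.measurable_prod _ fun m _ => (hf m.succ).comp
        ((measurable_chainPt (k + 1) t b m.1).prodMk (measurable_chainPt (k + 1) t b (m.1 + 1)))
    calc (∫⁻ u : Fin (k + 1) → X, F u ∂(Measure.pi fun _ => μ))
        = ∫⁻ x : X × (Fin k → X),
            F ((MeasurableEquiv.piFinSuccAbove (fun _ : Fin (k + 1) => X) 0).symm x)
          ∂(μ.prod (Measure.pi fun _ => μ)) := key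
      _ = ∫⁻ t, ∫⁻ v : Fin k → X,
            F ((MeasurableEquiv.piFinSuccAbove (fun _ : Fin (k + 1) => X) 0).symm (t, v))
          ∂(Measure.pi fun _ => μ) ∂μ :=
          lintegral_prod _ ((hF.comp (MeasurableEquiv.measurable _)).aemeasurable)
      _ = ∫⁻ t, f 0 (a, t) * Kcomp μ k (fun i => f i.succ) (t, b) ∂μ := by
          refine lintegral_congr fun t => ?_
          rw [show (∫⁻ v : Fin k → X,
              F ((MeasurableEquiv.piFinSuccAbove (fun _ : Fin (k + 1) => X) 0).symm (t, v))
              ∂(Measure.pi fun _ => μ)) = ∫⁻ v : Fin k → X,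
                f 0 (a, t) * ∏ m : Fin (k + 1),
                  f m.succ (chainPt (k + 1) t b v m.1, chainPt (k + 1) t b v (m.1 + 1))
              ∂(Measure.pi fun _ => μ) from lintegral_congr fun v => by rw [he, hFcons]]
          rw [lintegral_const_mul _ (hP t)]
          rw [chain_lintegral_eq k (fun i => f i.succ) (fun i => hf i.succ) t b]
      _ = Kcomp μ (k + 1) f (a, b) := rfl

lemma chain_measurePreserving (k : ℕ) :
    MeasurePreserving
      (fun x : (X × X) × (Fin k → X) => fun j : Fin (k + 2) => chainPt (k + 1) x.1.1 x.1.2 x.2 j.1)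
      ((μ.prod μ).prod (Measure.pi fun _ : Fin k => μ))
      (Measure.pi fun _ : Fin (k + 2) => μ) := by
  have h1 := measurePreserving_prodAssoc μ μ (Measure.pi fun _ : Fin k => μ)
  have h2 := (measurePreserving_piFinSuccAbove (fun _ : Fin (k + 1) => μ) (Fin.last k)).symm
  have h2' := (MeasurePreserving.id μ).prod h2
  have h3 := (measurePreserving_piFinSuccAbove (fun _ : Fin (k + 2) => μ) 0).symm
  have hcomp := (h3.comp h2').comp h1
  have hfun : (fun x : (X × X) × (Fin k → X) =>
      (MeasurableEquiv.piFinSuccAbove (fun _ : Fin (k + 2) => X) 0).symm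
        (Prod.map id (MeasurableEquiv.piFinSuccAbove (fun _ : Fin (k + 1) => X) (Fin.last k)).symm
          (MeasurableEquiv.prodAssoc x)))
      = fun x : (X × X) × (Fin k → X) =>
          fun j : Fin (k + 2) => chainPt (k + 1) x.1.1 x.1.2 x.2 j.1 := by
    funext x
    rcases x with ⟨⟨a, b⟩, u⟩
    rw [chain_eq_cons_snoc]
    show (MeasurableEquiv.piFinSuccAbove (fun _ : Fin (k + 2) => X) 0).symm
        (a, (MeasurableEquiv.piFinSuccAbove (fun _ : Fin (k + 1) => X) (Fin.last k)).symm (b, u))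
      = Fin.cons a (Fin.snoc u b)
    simp only [MeasurableEquiv.piFinSuccAbove_symm_apply, Fin.insertNthEquiv_zero,
      Fin.insertNthEquiv_last]
    rfl
  rw [← hfun]
  exact hcomp

end Aux

/-- For `φ ∈ L^∞(X^{n+1})` (with essential bound `C`) and Hilbert–Schmidt kernels
`A₁, …, Aₙ ∈ L²(X × X)`, the multilinear Schur multiplier
`M_φ(A₁,…,Aₙ)(t₀,tₙ) = ∫ φ(t₀,…,tₙ) A₁(t₀,t₁)⋯Aₙ(t_{n-1},tₙ) dt₁⋯dt_{n-1}`
is again in `L²(X × X)`, with `‖M_φ(A₁,…,Aₙ)‖₂ ≤ C ∏ᵢ ‖Aᵢ‖₂`. -/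
theorem multilinear_schur_hilbert_schmidt
    {X : Type*} [MeasurableSpace X] (μ : Measure X) [SigmaFinite μ]
    (n : ℕ) (hn : 1 ≤ n)
    (φ : (Fin (n + 1) → X) → ℂ) (hφm : Measurable φ)
    (C : ℝ) (hC0 : 0 ≤ C)
    (hφb : ∀ᵐ x ∂(Measure.pi fun _ : Fin (n + 1) => μ), ‖φ x‖ ≤ C)
    (A : Fin n → X × X → ℂ) (hAm : ∀ i, Measurable (A i))
    (hA : ∀ i, MemLp (A i) 2 (μ.prod μ)) :
    MemLp (fun p : X × X =>
        ∫ u : Fin (n - 1) → X,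
          φ (fun j => chainPt n p.1 p.2 u j.1) *
            ∏ m : Fin n, A m (chainPt n p.1 p.2 u m.1, chainPt n p.1 p.2 u (m.1 + 1))
          ∂(Measure.pi fun _ => μ)) 2 (μ.prod μ)
    ∧ eLpNorm (fun p : X × X =>
        ∫ u : Fin (n - 1) → X,
          φ (fun j => chainPt n p.1 p.2 u j.1) *
            ∏ m : Fin n, A m (chainPt n p.1 p.2 u m.1, chainPt n p.1 p.2 u (m.1 + 1))
          ∂(Measure.pi fun _ => μ)) 2 (μ.prod μ)
      ≤ ENNReal.ofReal C * ∏ i : Fin n, eLpNorm (A i) 2 (μ.prod μ) := by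
  obtain ⟨k, rfl⟩ : ∃ k, n = k + 1 := ⟨n - 1, by omega⟩
  -- the integrand as a function on the product space
  set g : (X × X) × (Fin k → X) → ℂ := fun q =>
    φ (fun j => chainPt (k + 1) q.1.1 q.1.2 q.2 j.1) *
      ∏ m : Fin (k + 1),
        A m (chainPt (k + 1) q.1.1 q.1.2 q.2 m.1, chainPt (k + 1) q.1.1 q.1.2 q.2 (m.1 + 1))
    with hgdef
  have hgm : Measurable g := by
    refine Measurable.mul ?_ ?_
    · exact hφm.comp (chain_measurePreserving μ k).measurable
    · exact Finset.measurable_prod _ fun m _ => (hAm m).comp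
        ((measurable_chainPt_pair (k + 1) m.1).prodMk (measurable_chainPt_pair (k + 1) (m.1 + 1)))
  set M : X × X → ℂ := fun p => ∫ u : Fin k → X, g (p, u) ∂(Measure.pi fun _ => μ) with hMdef
  have hMsm : AEStronglyMeasurable M (μ.prod μ) :=
    hgm.stronglyMeasurable.integral_prod_right'.aestronglyMeasurable
  -- the nonnegative kernels
  set f : Fin (k + 1) → X × X → ℝ≥0∞ := fun i q => (‖A i q‖₊ : ℝ≥0∞) with hfdef
  have hfm : ∀ i, Measurable (f i) := fun i => (hAm i).enorm
  -- general formula for the L² seminorm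
  have hsnorm : ∀ h : X × X → ℂ, eLpNorm h 2 (μ.prod μ)
      = (∫⁻ p, (‖h p‖₊ : ℝ≥0∞) ^ 2 ∂(μ.prod μ)) ^ (1/(2:ℝ)) := by
    intro h
    rw [eLpNorm_eq_lintegral_rpow_enorm_toReal two_ne_zero ENNReal.ofNat_ne_top]
    norm_num [ENNReal.rpow_two]
    rfl
  -- transfer of the essential bound of φ
  have htrans := (chain_measurePreserving μ k).quasiMeasurePreserving.ae hφb
  have h2 := Measure.ae_ae_of_ae_prod htrans
  -- pointwise bound
  have hprodmeas : ∀ p : X × X, Measurable fun u : Fin k → X => ∏ m : Fin (k + 1),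
      f m (chainPt (k + 1) p.1 p.2 u m.1, chainPt (k + 1) p.1 p.2 u (m.1 + 1)) := fun p =>
    Finset.measurable_prod _ fun m _ => (hfm m).comp
      ((measurable_chainPt (k + 1) p.1 p.2 m.1).prodMk
        (measurable_chainPt (k + 1) p.1 p.2 (m.1 + 1)))
  have hMbound : ∀ᵐ p ∂(μ.prod μ), (‖M p‖₊ : ℝ≥0∞) ≤ ENNReal.ofReal C * Kcomp μ k f p := by
    filter_upwards [h2] with p hp
    calc (‖M p‖₊ : ℝ≥0∞)
        ≤ ∫⁻ u : Fin k → X, (‖g (p, u)‖₊ : ℝ≥0∞) ∂(Measure.pi fun _ => μ) :=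
          enorm_integral_le_lintegral_enorm _
      _ ≤ ∫⁻ u : Fin k → X, ENNReal.ofReal C * ∏ m : Fin (k + 1),
            f m (chainPt (k + 1) p.1 p.2 u m.1, chainPt (k + 1) p.1 p.2 u (m.1 + 1))
          ∂(Measure.pi fun _ => μ) := by
          refine lintegral_mono_ae ?_
          filter_upwards [hp] with u hu
          rw [hgdef]
          simp only [nnnorm_mul, nnnorm_prod, ENNReal.coe_mul, ENNReal.coe_finset_prod]
          gcongr
          rw [← ENNReal.ofReal_coe_nnreal, coe_nnnorm]
          exact ENNReal.ofReal_le_ofReal hu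
      _ = ENNReal.ofReal C * Kcomp μ k f p := by
          rw [lintegral_const_mul _ (hprodmeas p),
            chain_lintegral_eq μ k f hfm p.1 p.2]
  have hKm : Measurable (Kcomp μ k f) := Kcomp_measurable μ k f hfm
  have hKsq := Kcomp_sq_le μ k f hfm
  -- the eLpNorm bound
  have hbound : eLpNorm M 2 (μ.prod μ)
      ≤ ENNReal.ofReal C * ∏ i : Fin (k + 1), eLpNorm (A i) 2 (μ.prod μ) := by
    rw [hsnorm M]
    calc (∫⁻ p, (‖M p‖₊ : ℝ≥0∞) ^ 2 ∂(μ.prod μ)) ^ (1/(2:ℝ))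
        ≤ (∫⁻ p, (ENNReal.ofReal C * Kcomp μ k f p) ^ 2 ∂(μ.prod μ)) ^ (1/(2:ℝ)) := by
          refine ENNReal.rpow_le_rpow ?_ (by norm_num)
          refine lintegral_mono_ae ?_
          filter_upwards [hMbound] with p hp
          exact pow_le_pow_left₀ zero_le hp 2
      _ = ENNReal.ofReal C * (∫⁻ p, Kcomp μ k f p ^ 2 ∂(μ.prod μ)) ^ (1/(2:ℝ)) := by
          simp_rw [mul_pow]
          rw [lintegral_const_mul _ (hKm.pow_const 2),
            ENNReal.mul_rpow_of_nonneg _ _ (by norm_num : (0:ℝ) ≤ 1/2)]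
          congr 1
          rw [← ENNReal.rpow_natCast (ENNReal.ofReal C) 2, ← ENNReal.rpow_mul]
          norm_num
      _ ≤ ENNReal.ofReal C * (∏ i : Fin (k + 1), ∫⁻ q, f i q ^ 2 ∂(μ.prod μ)) ^ (1/(2:ℝ)) := by
          exact mul_le_mul_right (ENNReal.rpow_le_rpow hKsq (by norm_num)) _
      _ = ENNReal.ofReal C * ∏ i : Fin (k + 1), (∫⁻ q, f i q ^ 2 ∂(μ.prod μ)) ^ (1/(2:ℝ)) := by
          rw [ENNReal.prod_rpow_of_nonneg (by norm_num : (0:ℝ) ≤ 1/2)]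
      _ = ENNReal.ofReal C * ∏ i : Fin (k + 1), eLpNorm (A i) 2 (μ.prod μ) := by
          congr 1
          exact Finset.prod_congr rfl fun i _ => (hsnorm (A i)).symm
  have hlt : ENNReal.ofReal C * ∏ i : Fin (k + 1), eLpNorm (A i) 2 (μ.prod μ) < ⊤ :=
    ENNReal.mul_lt_top ENNReal.ofReal_lt_top
      (ENNReal.prod_lt_top fun i _ => (hA i).2)
  exact ⟨⟨hMsm, lt_of_le_of_lt hbound hlt⟩, hbound⟩
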